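/- In a geodesic metric space, suppose [x,y] and [u,v] are geodesic segments such that u is a nearest point of [u,v] to x, v is a nearest point of [u,v] to y, and the distance between the sets [x,y] and [u,v] is larger than d(u,v). Then [x,y] is contained in the union of 5 open balls each disjoint from [u,v]. -/

import Mathlib

def GeodSeg {X : Type*} [MetricSpace X] (s : Set X) (a b : X) : Prop :=
  ∃ f : ℝ → X, f 0 = a ∧ f (dist a b) = b ∧
    (∀ u ∈ Set.Icc (0:ℝ) (dist a b), ∀ v ∈ Set.Icc (0:ℝ) (dist a b),
      dist (f u) (f v) = |u - v|) ∧
    s = f '' Set.Icc (0:ℝ) (dist a b)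

def projSet {X : Type*} [MetricSpace X] (s : Set X) (x : X) : Set X :=
  {p | p ∈ s ∧ ∀ q ∈ s, dist x p ≤ dist x q}

def setProj {X : Type*} [MetricSpace X] (s K : Set X) : Set X :=
  ⋃ x ∈ K, projSet s x

def AxiomDD (X : Type*) [MetricSpace X] (C : ℝ) : Prop :=
  ∀ (s : Set X) (a b : X), GeodSeg s a b →
    ∀ x x' p p' : X, p ∈ projSet s x → p' ∈ projSet s x' → dist p p' < dist x x' + C

def Contracting {X : Type*} [MetricSpace X] (B : ℝ) (s : Set X) : Prop :=
  ∀ (z : X) (r : ℝ), Metric.ball z r ∩ s = ∅ →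
    Metric.diam (setProj s (Metric.ball z r)) < B

theorem stmt10 {X : Type*} [MetricSpace X] (sxy suv : Set X) (x y u v : X)
    (hxy : GeodSeg sxy x y) (huv : GeodSeg suv u v)
    (hu : u ∈ projSet suv x) (hv : v ∈ projSet suv y)
    (p₀ q₀ : X) (hp₀ : p₀ ∈ sxy) (hq₀ : q₀ ∈ suv)
    (hmin : ∀ p ∈ sxy, ∀ q ∈ suv, dist p₀ q₀ ≤ dist p q)
    (hgt : dist u v < dist p₀ q₀) :
    ∃ (c : Fin 5 → X) (r : Fin 5 → ℝ),
      (∀ i, Metric.ball (c i) (r i) ∩ suv = ∅) ∧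
      sxy ⊆ ⋃ i, Metric.ball (c i) (r i) := by
  obtain ⟨f, hf0, hfL, hfiso, hs⟩ := hxy
  set L := dist x y with hLdef
  set a := dist x u with hadef
  set b := dist y v with hbdef
  set d := dist p₀ q₀ with hddef
  have hd0 : (0:ℝ) < d := lt_of_le_of_lt dist_nonneg hgt
  have hmem : min a L ∈ Set.Icc (0:ℝ) L :=
    ⟨le_min dist_nonneg dist_nonneg, min_le_right _ _⟩
  have hmid : f (min a L) ∈ sxy := by
    rw [hs]; exact ⟨min a L, hmem, rfl⟩
  have hL4 : L ≤ a + dist u v + b := by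
    calc L ≤ dist x u + dist u v + dist v y := dist_triangle4 x u v y
    _ = a + dist u v + b := by rw [dist_comm v y]
  refine ⟨![x, y, f (min a L), x, x], ![a, b, d, 0, 0], ?_, ?_⟩
  · have dx : Metric.ball x a ∩ suv = ∅ := by
      apply Set.eq_empty_iff_forall_notMem.2
      rintro q ⟨hq1, hq2⟩
      exact absurd (hu.2 q hq2) (not_le.2 (Metric.mem_ball'.1 hq1))
    have dy : Metric.ball y b ∩ suv = ∅ := by
      apply Set.eq_empty_iff_forall_notMem.2
      rintro q ⟨hq1, hq2⟩
      exact absurd (hv.2 q hq2) (not_le.2 (Metric.mem_ball'.1 hq1))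
    have dm : Metric.ball (f (min a L)) d ∩ suv = ∅ := by
      apply Set.eq_empty_iff_forall_notMem.2
      rintro q ⟨hq1, hq2⟩
      exact absurd (hmin _ hmid q hq2) (not_le.2 (Metric.mem_ball'.1 hq1))
    intro i
    fin_cases i <;> simp_all [Metric.ball_zero]
  · intro p hp
    rw [hs] at hp
    obtain ⟨t, ht, rfl⟩ := hp
    rw [Set.mem_iUnion]
    by_cases h1 : t < a
    · refine ⟨0, ?_⟩
      simp only [Matrix.cons_val_zero, Metric.mem_ball]
      have : dist (f t) (f 0) = |t - 0| := hfiso t ht 0 ⟨le_refl 0, dist_nonneg⟩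
      rw [hf0] at this
      rw [this]
      rwa [sub_zero, abs_of_nonneg ht.1]
    · by_cases h2 : L - t < b
      · refine ⟨1, ?_⟩
        simp only [Matrix.cons_val_one, Matrix.head_cons, Matrix.cons_val_zero, Metric.mem_ball]
        have : dist (f t) (f L) = |t - L| := hfiso t ht L ⟨dist_nonneg, le_refl L⟩
        rw [hfL] at this
        rw [this, abs_sub_comm, abs_of_nonneg (by linarith [ht.2])]
        linarith
      · refine ⟨2, ?_⟩
        push_neg at h1 h2
        have haL : a ≤ L := le_trans h1 ht.2
        have hmin' : min a L = a := min_eq_left haL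
        simp only [Matrix.cons_val_two, Matrix.tail_cons, Matrix.head_cons, Metric.mem_ball]
        have hma : (a:ℝ) ∈ Set.Icc (0:ℝ) L := ⟨dist_nonneg, haL⟩
        have : dist (f t) (f (min a L)) = |t - a| := by rw [hmin']; exact hfiso t ht a hma
        rw [this, abs_of_nonneg (by linarith)]
        have : t ≤ L - b := by linarith
        calc t - a ≤ dist u v := by linarith
        _ < d := hgt
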